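/- Let the signature contain an absorption pair (f, ε_f), a binary symbol g, a unary symbol h, and a constant a (all distinct from ε_f and from each other), and let u1, u2, v1, v2 be pairwise distinct variables. Then the four linear terms g(f(u1,a), f(u2,h(ε_f))), g(f(u1,a), f(a,v2)), g(f(h(ε_f),v1), f(u2,h(ε_f))), and g(f(h(ε_f),v1), f(a,v2)) form a minimal complete set of linear Abs-generalizations of g(ε_f, f(a, h(ε_f))) and g(f(h(ε_f), a), ε_f): each of them is a linear Abs-generalization of these two terms, every linear Abs-generalization of these two terms is ≲_Abs one of the four, and no two distinct terms among the four are comparable under ≲_Abs. -/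

import Mathlib

/- Common development: first-order terms, absorption theories, anti-unification
   equations, configurations and the AUnif transformation rules. -/

namespace AbsAU

/-- First-order terms over a set `F` of function symbols, with variables drawn
from the countably infinite set `ℕ`. -/
inductive Tm (F : Type) : Type where
  | var : ℕ → Tm F
  | app : F → List (Tm F) → Tm F

namespace Tm

variable {F : Type}

/-- Application of a substitution (given as a total map on variables) to a term. -/
def subst (σ : ℕ → Tm F) : Tm F → Tm F
  | var x => σ x
  | app f ts => app f (ts.attach.map fun t => subst σ t.1)
decreasing_by
  have := List.sizeOf_lt_of_mem t.2
  simp only [Tm.app.sizeOf_spec]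
  omega

/-- The head of a term: a variable or a function symbol. -/
def head : Tm F → ℕ ⊕ F
  | var x => Sum.inl x
  | app f _ => Sum.inr f

end Tm

/-- `VarIn x t` holds iff the variable `x` occurs in the term `t`. -/
inductive VarIn {F : Type} : ℕ → Tm F → Prop where
  | var (x : ℕ) : VarIn x (.var x)
  | app {x : ℕ} {t : Tm F} (f : F) {ts : List (Tm F)} :
      t ∈ ts → VarIn x t → VarIn x (.app f ts)

/-- `SymOcc f t` holds iff the function symbol `f` occurs in the term `t`. -/
inductive SymOcc {F : Type} (f : F) : Tm F → Prop where
  | head (ts : List (Tm F)) : SymOcc f (.app f ts)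
  | arg {t : Tm F} (g : F) {ts : List (Tm F)} :
      t ∈ ts → SymOcc f t → SymOcc f (.app g ts)

/-- Signature data: an arity for every symbol and the distinguished wild card
constant `⋆`. -/
structure AbsSig (F : Type) where
  arity : F → ℕ
  star : F
  star_arity : arity star = 0

/-- Arity-respecting (well-formed) terms. -/
inductive WFT {F : Type} (Sg : AbsSig F) : Tm F → Prop where
  | var (x : ℕ) : WFT Sg (.var x)
  | app {f : F} {ts : List (Tm F)} :
      ts.length = Sg.arity f → (∀ t ∈ ts, WFT Sg t) → WFT Sg (.app f ts)

/-- An absorption theory: finitely many pairs `(f, ε_f)` of a binary symbol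
together with its absorption constant, all chosen symbols pairwise distinct and
distinct from the wild card. -/
structure AbsTh {F : Type} (Sg : AbsSig F) where
  pairs : Set (F × F)
  finite : pairs.Finite
  binary : ∀ p ∈ pairs, Sg.arity p.1 = 2
  constZ : ∀ p ∈ pairs, Sg.arity p.2 = 0
  distinct : ∀ p ∈ pairs, ∀ q ∈ pairs, p ≠ q →
      p.1 ≠ q.1 ∧ p.1 ≠ q.2 ∧ p.2 ≠ q.1 ∧ p.2 ≠ q.2
  ne : ∀ p ∈ pairs, p.1 ≠ p.2
  star_ne : ∀ p ∈ pairs, Sg.star ≠ p.1 ∧ Sg.star ≠ p.2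

variable {F : Type}

/-- `≈_Abs` : the least congruence on terms containing all substitution
instances of the absorption axioms `f(ε_f, x) ≈ ε_f` and `f(x, ε_f) ≈ ε_f`. -/
inductive AbsEq {Sg : AbsSig F} (Th : AbsTh Sg) : Tm F → Tm F → Prop where
  | absL {f e : F} (t : Tm F) : (f, e) ∈ Th.pairs →
      AbsEq Th (.app f [.app e [], t]) (.app e [])
  | absR {f e : F} (t : Tm F) : (f, e) ∈ Th.pairs →
      AbsEq Th (.app f [t, .app e []]) (.app e [])
  | refl (t : Tm F) : AbsEq Th t t
  | symm {s t : Tm F} : AbsEq Th s t → AbsEq Th t s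
  | trans {s t u : Tm F} : AbsEq Th s t → AbsEq Th t u → AbsEq Th s u
  | congr (f : F) {ss ts : List (Tm F)} :
      List.Forall₂ (AbsEq Th) ss ts → AbsEq Th (.app f ss) (.app f ts)

/-- The domain of a substitution. -/
def Dom (σ : ℕ → Tm F) : Set ℕ := {x | σ x ≠ .var x}

/-- A substitution proper has a finite domain. -/
def FinDom (σ : ℕ → Tm F) : Prop := (Dom σ).Finite

/-- The variables occurring in the range of a substitution. -/
def Rvar (σ : ℕ → Tm F) : Set ℕ := {y | ∃ x ∈ Dom σ, VarIn y (σ x)}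

/-- `r ≲_Abs s` : `r` is more general than `s` modulo the absorption theory. -/
def MoreGen {Sg : AbsSig F} (Th : AbsTh Sg) (r s : Tm F) : Prop :=
  ∃ σ : ℕ → Tm F, FinDom σ ∧ AbsEq Th (r.subst σ) s

/-- `r` is an `Abs`-generalization of `s` and `t`. -/
def Gen {Sg : AbsSig F} (Th : AbsTh Sg) (r s t : Tm F) : Prop :=
  MoreGen Th r s ∧ MoreGen Th r t

/-- The set of all `Abs`-generalizations of `s` and `t`. -/
def GAbs {Sg : AbsSig F} (Th : AbsTh Sg) (s t : Tm F) : Set (Tm F) :=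
  {r | Gen Th r s t}

/-- `M` is a minimal complete set of `Abs`-generalizations of `s` and `t`. -/
def IsMCSG {Sg : AbsSig F} (Th : AbsTh Sg) (M : Set (Tm F)) (s t : Tm F) : Prop :=
  M ⊆ GAbs Th s t ∧
  (∀ r ∈ GAbs Th s t, ∃ r' ∈ M, MoreGen Th r r') ∧
  (∀ r ∈ M, ∀ r' ∈ M, MoreGen Th r r' → r = r')

/-- `Abs`-normal forms: no absorption constant occurs as an argument of its
absorption symbol. -/
inductive NF {Sg : AbsSig F} (Th : AbsTh Sg) : Tm F → Prop where
  | var (x : ℕ) : NF Th (.var x)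
  | app {f : F} {ts : List (Tm F)} :
      (∀ t ∈ ts, NF Th t) →
      (∀ e : F, (f, e) ∈ Th.pairs → Tm.app e [] ∉ ts) →
      NF Th (.app f ts)

/-- An anti-unification equation (AUE) `lhs ≜_lab rhs`. -/
structure AUE (F : Type) where
  lhs : Tm F
  lab : ℕ
  rhs : Tm F

/-- The labels of a set of AUEs. -/
def labels (W : Set (AUE F)) : Set ℕ := AUE.lab '' W

/-- A set of AUEs is valid if its labels are pairwise distinct. -/
def ValidAUEs (W : Set (AUE F)) : Prop :=
  ∀ a ∈ W, ∀ b ∈ W, a.lab = b.lab → a = b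

/-- The wild card, as a term. -/
def starTm (Sg : AbsSig F) : Tm F := .app Sg.star []

/-- A wild AUE has the wild card on one of its sides. -/
def WildAUE (Sg : AbsSig F) (a : AUE F) : Prop :=
  a.lhs = starTm Sg ∨ a.rhs = starTm Sg

/-- The heads of `s` and `t` form a related absorption pair. -/
def RelatedAbs {Sg : AbsSig F} (Th : AbsTh Sg) (s t : Tm F) : Prop :=
  ∃ f e : F, (f, e) ∈ Th.pairs ∧
    ((s.head = Sum.inr f ∧ t.head = Sum.inr e) ∨
     (s.head = Sum.inr e ∧ t.head = Sum.inr f))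

/-- A solved AUE: distinct heads, no related absorption symbols, not wild. -/
def SolvedAUE {Sg : AbsSig F} (Th : AbsTh Sg) (a : AUE F) : Prop :=
  a.lhs.head ≠ a.rhs.head ∧ ¬ RelatedAbs Th a.lhs a.rhs ∧ ¬ WildAUE Sg a

/-- A proper object term appearing in an AUE of a configuration: in
`Abs`-normal form, arity-respecting, ground, and wild-card free. -/
def GoodTm {Sg : AbsSig F} (Th : AbsTh Sg) (t : Tm F) : Prop :=
  NF Th t ∧ WFT Sg t ∧ (∀ x : ℕ, ¬ VarIn x t) ∧ ¬ SymOcc Sg.star t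

/-- A configuration `⟨A; S; T; θ⟩`. -/
structure Config (F : Type) where
  A : Set (AUE F)
  S : Set (AUE F)
  T : Set (AUE F)
  θ : ℕ → Tm F

/-- The defining properties of configurations: `A`, `S`, `T` are (finite) valid
sets of unsolved, solved, resp. wild AUEs over object terms in `Abs`-normal
form, `θ` is a substitution, (i) the labels of `A`, `S`, `T` and the domain of
`θ` are pairwise disjoint, and (ii) the variables occurring in the range of `θ`
are exactly the labels of `A`, `S` and `T`. -/
structure IsConfig {Sg : AbsSig F} (Th : AbsTh Sg) (C : Config F) : Prop where
  finA : C.A.Finite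
  finS : C.S.Finite
  finT : C.T.Finite
  validA : ValidAUEs C.A
  validS : ValidAUEs C.S
  validT : ValidAUEs C.T
  goodA : ∀ a ∈ C.A, GoodTm Th a.lhs ∧ GoodTm Th a.rhs
  goodS : ∀ a ∈ C.S, GoodTm Th a.lhs ∧ GoodTm Th a.rhs
  solvedS : ∀ a ∈ C.S, SolvedAUE Th a
  wildT : ∀ a ∈ C.T,
      (a.lhs = starTm Sg ∧ GoodTm Th a.rhs) ∨
      (a.rhs = starTm Sg ∧ GoodTm Th a.lhs)
  finDom : FinDom C.θ
  nfθ : ∀ x : ℕ, NF Th (C.θ x) ∧ WFT Sg (C.θ x)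
  disjAS : Disjoint (labels C.A) (labels C.S)
  disjAT : Disjoint (labels C.A) (labels C.T)
  disjST : Disjoint (labels C.S) (labels C.T)
  disjAD : Disjoint (labels C.A) (Dom C.θ)
  disjSD : Disjoint (labels C.S) (Dom C.θ)
  disjTD : Disjoint (labels C.T) (Dom C.θ)
  rvarEq : Rvar C.θ = labels C.A ∪ labels C.S ∪ labels C.T

/-- The substitution `{x ↦ t}`. -/
def single (x : ℕ) (t : Tm F) : ℕ → Tm F :=
  fun z => if z = x then t else .var z

/-- Composition `θ{x ↦ t}` of a substitution with a single binding. -/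
def compOne (θ : ℕ → Tm F) (x : ℕ) (t : Tm F) : ℕ → Tm F :=
  fun z => (θ z).subst (single x t)

/-- A variable is fresh for a configuration. -/
def FreshIn (C : Config F) (y : ℕ) : Prop :=
  y ∉ labels C.A ∧ y ∉ labels C.S ∧ y ∉ labels C.T ∧
  y ∉ Dom C.θ ∧ y ∉ Rvar C.θ

/-- Canonical choice of the next fresh variable for a configuration. -/
noncomputable def nextFresh (C : Config F) : ℕ :=
  sInf {k : ℕ | ∀ m : ℕ, k ≤ m → FreshIn C m}

/-- The set of AUEs `{s₁ ≜_{y₁} t₁, …, sₙ ≜_{yₙ} tₙ}`. -/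
def zipAUEs (ss : List (Tm F)) (ys : List ℕ) (ts : List (Tm F)) : Set (AUE F) :=
  {a | ∃ (i : ℕ) (h1 : i < ss.length) (h2 : i < ys.length) (h3 : i < ts.length),
      a = ⟨ss.get ⟨i, h1⟩, ys.get ⟨i, h2⟩, ts.get ⟨i, h3⟩⟩}

/-- The AUnif transformation rules: Decompose, Solve, the four Expansion rules
for left/right absorption, and Merge. -/
inductive Step {Sg : AbsSig F} (Th : AbsTh Sg) : Config F → Config F → Prop where
  | dec (f : F) (ss ts : List (Tm F)) (x : ℕ) (ys : List ℕ)
      (A S T : Set (AUE F)) (θ : ℕ → Tm F)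
      (hlen : ss.length = ts.length)
      (hnotin : (⟨.app f ss, x, .app f ts⟩ : AUE F) ∉ A)
      (hys : ys = (List.range ss.length).map
          (fun i => nextFresh (⟨insert ⟨.app f ss, x, .app f ts⟩ A, S, T, θ⟩ : Config F) + i)) :
      Step Th ⟨insert ⟨.app f ss, x, .app f ts⟩ A, S, T, θ⟩
        ⟨zipAUEs ss ys ts ∪ A, S, T, compOne θ x (.app f (ys.map Tm.var))⟩
  | sol (a : AUE F) (A S T : Set (AUE F)) (θ : ℕ → Tm F)
      (hhead : a.lhs.head ≠ a.rhs.head)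
      (hrel : ¬ RelatedAbs Th a.lhs a.rhs)
      (hnotin : a ∉ A) :
      Step Th ⟨insert a A, S, T, θ⟩ ⟨A, insert a S, T, θ⟩
  | expLA1 (f e : F) (t1 t2 : Tm F) (x y1 y2 : ℕ)
      (A S T : Set (AUE F)) (θ : ℕ → Tm F)
      (hp : (f, e) ∈ Th.pairs)
      (hnotin : (⟨.app e [], x, .app f [t1, t2]⟩ : AUE F) ∉ A)
      (hy1 : y1 = nextFresh (⟨insert ⟨.app e [], x, .app f [t1, t2]⟩ A, S, T, θ⟩ : Config F))
      (hy2 : y2 = y1 + 1) :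
      Step Th ⟨insert ⟨.app e [], x, .app f [t1, t2]⟩ A, S, T, θ⟩
        ⟨insert ⟨.app e [], y1, t1⟩ A, S, insert ⟨starTm Sg, y2, t2⟩ T,
          compOne θ x (.app f [.var y1, .var y2])⟩
  | expLA2 (f e : F) (t1 t2 : Tm F) (x y1 y2 : ℕ)
      (A S T : Set (AUE F)) (θ : ℕ → Tm F)
      (hp : (f, e) ∈ Th.pairs)
      (hnotin : (⟨.app e [], x, .app f [t1, t2]⟩ : AUE F) ∉ A)
      (hy1 : y1 = nextFresh (⟨insert ⟨.app e [], x, .app f [t1, t2]⟩ A, S, T, θ⟩ : Config F))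
      (hy2 : y2 = y1 + 1) :
      Step Th ⟨insert ⟨.app e [], x, .app f [t1, t2]⟩ A, S, T, θ⟩
        ⟨insert ⟨.app e [], y2, t2⟩ A, S, insert ⟨starTm Sg, y1, t1⟩ T,
          compOne θ x (.app f [.var y1, .var y2])⟩
  | expRA1 (f e : F) (s1 s2 : Tm F) (x y1 y2 : ℕ)
      (A S T : Set (AUE F)) (θ : ℕ → Tm F)
      (hp : (f, e) ∈ Th.pairs)
      (hnotin : (⟨.app f [s1, s2], x, .app e []⟩ : AUE F) ∉ A)
      (hy1 : y1 = nextFresh (⟨insert ⟨.app f [s1, s2], x, .app e []⟩ A, S, T, θ⟩ : Config F))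
      (hy2 : y2 = y1 + 1) :
      Step Th ⟨insert ⟨.app f [s1, s2], x, .app e []⟩ A, S, T, θ⟩
        ⟨insert ⟨s1, y1, .app e []⟩ A, S, insert ⟨s2, y2, starTm Sg⟩ T,
          compOne θ x (.app f [.var y1, .var y2])⟩
  | expRA2 (f e : F) (s1 s2 : Tm F) (x y1 y2 : ℕ)
      (A S T : Set (AUE F)) (θ : ℕ → Tm F)
      (hp : (f, e) ∈ Th.pairs)
      (hnotin : (⟨.app f [s1, s2], x, .app e []⟩ : AUE F) ∉ A)
      (hy1 : y1 = nextFresh (⟨insert ⟨.app f [s1, s2], x, .app e []⟩ A, S, T, θ⟩ : Config F))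
      (hy2 : y2 = y1 + 1) :
      Step Th ⟨insert ⟨.app f [s1, s2], x, .app e []⟩ A, S, T, θ⟩
        ⟨insert ⟨s2, y2, .app e []⟩ A, S, insert ⟨s1, y1, starTm Sg⟩ T,
          compOne θ x (.app f [.var y1, .var y2])⟩
  | mer (s t : Tm F) (x y : ℕ) (S T : Set (AUE F)) (θ : ℕ → Tm F)
      (hxy : x ≠ y)
      (hx : (⟨s, x, t⟩ : AUE F) ∉ S) (hy : (⟨s, y, t⟩ : AUE F) ∉ S) :
      Step Th ⟨∅, insert ⟨s, x, t⟩ (insert ⟨s, y, t⟩ S), T, θ⟩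
        ⟨∅, insert ⟨s, y, t⟩ S, T, compOne θ x (.var y)⟩

/-- A final (normal) configuration: no rule applies. -/
def Final {Sg : AbsSig F} (Th : AbsTh Sg) (C : Config F) : Prop :=
  ∀ C' : Config F, ¬ Step Th C C'

/-- `AUnif(C)`: the set of final configurations reachable from `C`. -/
def AUnifSet {Sg : AbsSig F} (Th : AbsTh Sg) (C : Config F) : Set (Config F) :=
  {C' | Relation.ReflTransGen (Step Th) C C' ∧ Final Th C'}

open Classical in
/-- The left substitution `σ_W` associated with a set of AUEs. -/
noncomputable def sigmaW (W : Set (AUE F)) : ℕ → Tm F :=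
  fun y => if h : ∃ a, a ∈ W ∧ a.lab = y then h.choose.lhs else .var y

open Classical in
/-- The right substitution `ρ_W` associated with a set of AUEs. -/
noncomputable def rhoW (W : Set (AUE F)) : ℕ → Tm F :=
  fun y => if h : ∃ a, a ∈ W ∧ a.lab = y then h.choose.rhs else .var y

/-- The abstraction set `↑(t, σ)`. -/
def absSet {Sg : AbsSig F} (Th : AbsTh Sg) (t : Tm F) (σ : ℕ → Tm F) : Set (Tm F) :=
  {r | AbsEq Th (r.subst σ) t ∧ NF Th r ∧ ∀ x : ℕ, VarIn x r → x ∈ Dom σ}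

/-- `Ψ(T, S)`: the set of abstraction substitutions of a configuration with
abstraction `T` and store `S`. -/
def Psi {Sg : AbsSig F} (Th : AbsTh Sg) (T S : Set (AUE F)) : Set (ℕ → Tm F) :=
  {τ | Dom τ = labels T ∧ ∀ a ∈ T,
      (a.lhs = starTm Sg → τ a.lab ∈ absSet Th a.rhs (rhoW S)) ∧
      (a.rhs = starTm Sg → τ a.lab ∈ absSet Th a.lhs (sigmaW S))}

/-- The initial configuration `⟨{s ≜_x t}; ∅; ∅; ι⟩` with starting label `xst`
and starting substitution `ι = {xst ↦ x}`. -/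
def initConfig (s t : Tm F) (x xst : ℕ) : Config F :=
  ⟨{⟨s, x, t⟩}, ∅, ∅, single xst (.var x)⟩

/-- `AUnif(C₀)` is merged: identical solved AUEs in (possibly different) final
stores carry the same label, and equal labels carry identical AUEs. -/
def Merged {Sg : AbsSig F} (Th : AbsTh Sg) (C0 : Config F) : Prop :=
  ∀ C1 ∈ AUnifSet Th C0, ∀ C2 ∈ AUnifSet Th C0, ∀ a ∈ C1.S, ∀ b ∈ C2.S,
    ((a.lhs = b.lhs ∧ a.rhs = b.rhs) ↔ a.lab = b.lab)

/-- `C_AUnif(s, t)`: all generalizations computed from final configurations of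
the initial configuration for `s ≜_x t`, instantiated by abstraction
substitutions. -/
def CAUnif {Sg : AbsSig F} (Th : AbsTh Sg) (s t : Tm F) (x xst : ℕ) : Set (Tm F) :=
  {g | ∃ C' ∈ AUnifSet Th (initConfig s t x xst),
      ∃ τ ∈ Psi Th C'.T C'.S, g = (C'.θ x).subst τ}

/-- Linear terms: no variable occurs more than once. -/
inductive Linear {F : Type} : Tm F → Prop where
  | var (x : ℕ) : Linear (.var x)
  | app (f : F) {ts : List (Tm F)} :
      (∀ t ∈ ts, Linear t) →
      List.Pairwise (fun s t => ∀ x : ℕ, VarIn x s → ¬ VarIn x t) ts →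
      Linear (.app f ts)


section Core
variable {F : Type} {Sg : AbsSig F}

theorem subst_var (σ : ℕ → Tm F) (x : ℕ) : (Tm.var x).subst σ = σ x := by
  rw [Tm.subst]

theorem subst_app (σ : ℕ → Tm F) (k : F) (ls : List (Tm F)) :
    (Tm.app k ls).subst σ = Tm.app k (ls.map (Tm.subst σ)) := by
  rw [Tm.subst]; simp [List.attach_map_val]

theorem varIn_var_iff {z x : ℕ} : VarIn (F := F) z (.var x) ↔ z = x := by
  constructor
  · rintro ⟨⟩; rfl
  · rintro rfl; exact .var z

theorem varIn_app_iff {z : ℕ} {k : F} {ls : List (Tm F)} :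
    VarIn z (.app k ls) ↔ ∃ t ∈ ls, VarIn z t := by
  constructor
  · rintro (_ | ⟨_, ht, hv⟩); exact ⟨_, ‹_›, ‹_›⟩
  · rintro ⟨t, ht, hv⟩; exact .app k ht hv

theorem subst_congr (σ σ' : ℕ → Tm F) (t : Tm F)
    (h : ∀ z, VarIn z t → σ z = σ' z) : t.subst σ = t.subst σ' := by
  suffices H : ∀ n (t : Tm F), sizeOf t ≤ n → (∀ z, VarIn z t → σ z = σ' z) →
      t.subst σ = t.subst σ' from H _ t le_rfl h
  intro n
  induction n with
  | zero => intro t ht; cases t <;> simp at ht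
  | succ n ih =>
    intro t ht h
    cases t with
    | var x => rw [subst_var, subst_var]; exact h x (.var x)
    | app k ls =>
      rw [subst_app, subst_app]
      congr 1
      apply List.map_congr_left
      intro t' ht'
      have hs := List.sizeOf_lt_of_mem ht'
      apply ih
      · simp only [Tm.app.sizeOf_spec] at ht; omega
      · intro z hz; exact h z (.app k ht' hz)

theorem varFinite (t : Tm F) : {z | VarIn z t}.Finite := by
  suffices H : ∀ n (t : Tm F), sizeOf t ≤ n → {z | VarIn z t}.Finite from H _ t le_rfl
  intro n
  induction n with
  | zero => intro t ht; cases t <;> simp at ht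
  | succ n ih =>
    intro t ht
    cases t with
    | var x =>
      have : {z | VarIn (F := F) z (.var x)} = {x} := by
        ext z; simp [varIn_var_iff, Set.mem_singleton_iff]
      rw [this]; exact Set.finite_singleton x
    | app k ls =>
      have : {z | VarIn z (.app k ls)} = ⋃ t' ∈ ls, {z | VarIn z t'} := by
        ext z; simp [varIn_app_iff]
      rw [this]
      apply Set.Finite.biUnion (ls.finite_toSet)
      intro t' ht'
      have hs := List.sizeOf_lt_of_mem ht'
      apply ih
      simp only [Tm.app.sizeOf_spec] at ht; omega

end Core
section Norm
variable {F : Type} {Sg : AbsSig F}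

theorem pair_unique (Th : AbsTh Sg) {k e1 e2 : F}
    (h1 : (k, e1) ∈ Th.pairs) (h2 : (k, e2) ∈ Th.pairs) : e1 = e2 := by
  by_contra hne
  exact (Th.distinct _ h1 _ h2 (by simp [Prod.ext_iff, hne])).1 rfl

theorem pair_unique' (Th : AbsTh Sg) {k1 k2 e : F}
    (h1 : (k1, e) ∈ Th.pairs) (h2 : (k2, e) ∈ Th.pairs) : k1 = k2 := by
  by_contra hne
  exact (Th.distinct _ h1 _ h2 (by simp [Prod.ext_iff, hne])).2.2.2 rfl

theorem fst_ne_snd (Th : AbsTh Sg) {k e k' e' : F}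
    (h1 : (k, e) ∈ Th.pairs) (h2 : (k', e') ∈ Th.pairs) : k ≠ e' := by
  by_cases hpq : ((k, e) : F × F) = (k', e')
  · obtain ⟨rfl, rfl⟩ := Prod.mk.injEq .. ▸ hpq
    exact Th.ne _ h1
  · exact (Th.distinct _ h1 _ h2 hpq).2.1

open Classical in
noncomputable def collapse (Th : AbsTh Sg) (k : F) (ls : List (Tm F)) : Tm F :=
  if h : ∃ e, (k, e) ∈ Th.pairs ∧ ∃ t, ls = [Tm.app e [], t] ∨ ls = [t, Tm.app e []]
  then Tm.app h.choose [] else Tm.app k ls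

noncomputable def norm (Th : AbsTh Sg) : Tm F → Tm F
  | .var x => .var x
  | .app k ls => collapse Th k (ls.attach.map fun t => norm Th t.1)
decreasing_by
  have := List.sizeOf_lt_of_mem t.2
  simp only [Tm.app.sizeOf_spec]
  omega

theorem collapse_pos (Th : AbsTh Sg) {k e : F} (he : (k, e) ∈ Th.pairs) {ls : List (Tm F)} {t : Tm F}
    (h : ls = [Tm.app e [], t] ∨ ls = [t, Tm.app e []]) :
    collapse Th k ls = Tm.app e [] := by
  have hex : ∃ e, (k, e) ∈ Th.pairs ∧ ∃ t, ls = [Tm.app e [], t] ∨ ls = [t, Tm.app e []] :=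
    ⟨e, he, t, h⟩
  rw [collapse, dif_pos hex]
  have := hex.choose_spec.1
  rw [pair_unique Th this he]

theorem collapse_cases (Th : AbsTh Sg) (k : F) (ls : List (Tm F)) :
    collapse Th k ls = Tm.app k ls ∨
    ∃ e t, (k, e) ∈ Th.pairs ∧ (ls = [Tm.app e [], t] ∨ ls = [t, Tm.app e []]) ∧
      collapse Th k ls = Tm.app e [] := by
  by_cases hex : ∃ e, (k, e) ∈ Th.pairs ∧ ∃ t, ls = [Tm.app e [], t] ∨ ls = [t, Tm.app e []]
  · obtain ⟨e, he, t, h⟩ := hex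
    exact Or.inr ⟨e, t, he, h, collapse_pos Th he h⟩
  · left; rw [collapse, dif_neg hex]

theorem norm_var (Th : AbsTh Sg) (x : ℕ) : norm Th (.var x : Tm F) = .var x := by rw [norm]

theorem norm_app (Th : AbsTh Sg) (k : F) (ls : List (Tm F)) :
    norm Th (.app k ls) = collapse Th k (ls.map (norm Th)) := by
  rw [norm]; simp [List.attach_map_val]

theorem absEq_norm (Th : AbsTh Sg) (t : Tm F) : AbsEq Th t (norm Th t) := by
  suffices H : ∀ n (t : Tm F), sizeOf t ≤ n → AbsEq Th t (norm Th t) from H _ t le_rfl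
  intro n
  induction n with
  | zero => intro t ht; cases t <;> simp at ht
  | succ n ih =>
    intro t ht
    cases t with
    | var x => rw [norm_var]; exact .refl _
    | app k ls =>
      rw [norm_app]
      have hargs : AbsEq Th (.app k ls) (.app k (ls.map (norm Th))) := by
        apply AbsEq.congr
        rw [List.forall₂_map_right_iff]
        apply List.forall₂_same.2
        intro t' ht'
        have hs := List.sizeOf_lt_of_mem ht'
        apply ih
        simp only [Tm.app.sizeOf_spec] at ht; omega
      rcases collapse_cases Th k (ls.map (norm Th)) with hcol | ⟨e, t', he, hls, hcol⟩
      · rw [hcol]; exact hargs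
      · rw [hcol]
        refine hargs.trans ?_
        rcases hls with h2 | h2 <;> rw [h2]
        · exact .absL _ he
        · exact .absR _ he

theorem norm_empty_app (Th : AbsTh Sg) (k : F) : norm Th (.app k [] : Tm F) = .app k [] := by
  rw [norm_app]
  rcases collapse_cases Th k (List.map (norm Th) []) with h | ⟨e', t', _, h | h, _⟩ <;>
    simp_all

theorem norm_eq_of_absEq (Th : AbsTh Sg) {s t : Tm F} (h : AbsEq Th s t) :
    norm Th s = norm Th t := by
  refine @AbsEq.rec F Sg Th (fun s t _ => norm Th s = norm Th t)
    (fun ss ts _ => ss.map (norm Th) = ts.map (norm Th))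
    ?_ ?_ ?_ ?_ ?_ ?_ ?_ ?_ s t h
  · intro f e t hp
    rw [norm_app]
    simp only [List.map_cons, List.map_nil, norm_empty_app]
    exact collapse_pos Th hp (Or.inl rfl)
  · intro f e t hp
    rw [norm_app]
    simp only [List.map_cons, List.map_nil, norm_empty_app]
    exact collapse_pos Th hp (Or.inr rfl)
  · intro t; rfl
  · intro s t _ ih; exact ih.symm
  · intro s t u _ _ ih1 ih2; exact ih1.trans ih2
  · intro k ss ts _ ih
    rw [norm_app, norm_app, ih]
  · rfl
  · intro a b l1 l2 _ _ ih1 ih2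
    simp only [List.map_cons, ih1, ih2]

theorem absEq_iff_norm (Th : AbsTh Sg) (s t : Tm F) :
    AbsEq Th s t ↔ norm Th s = norm Th t := by
  constructor
  · exact norm_eq_of_absEq Th
  · intro h
    exact (absEq_norm Th s).trans (h ▸ (absEq_norm Th t).symm)

end Norm
section Inv
variable {F : Type} {Sg : AbsSig F} {Th : AbsTh Sg}

theorem moreGen_of_norm (r s : Tm F) (δ : ℕ → Tm F)
    (hn : norm Th (r.subst δ) = norm Th s) : MoreGen Th r s := by
  classical
  refine ⟨fun z => if VarIn z r then δ z else .var z, ?_, ?_⟩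
  · apply Set.Finite.subset (varFinite r)
    intro z hz
    by_contra hvz
    exact hz (if_neg hvz)
  · have heq : r.subst (fun z => if VarIn z r then δ z else .var z) = r.subst δ :=
      subst_congr _ _ r (fun z hz => if_pos hz)
    rw [heq, absEq_iff_norm]
    exact hn

theorem norm_app_isApp (Th : AbsTh Sg) (k : F) (ls : List (Tm F)) :
    ∃ k' ls', norm Th (.app k ls) = .app k' ls' := by
  rw [norm_app]
  rcases collapse_cases Th k (ls.map (norm Th)) with h | ⟨e', t', _, _, h⟩
  · exact ⟨_, _, h⟩
  · exact ⟨_, _, h⟩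

/-- Inversion when the normal form of an instance has a rigid head:
a symbol with no absorption pair and distinct from all absorption constants. -/
theorem inv_subst_rigid {c : F} (hc1 : ∀ e', (c, e') ∉ Th.pairs)
    (hc2 : ∀ p ∈ Th.pairs, c ≠ p.2) (q : Tm F) (θ : ℕ → Tm F) (lsc : List (Tm F))
    (hq : norm Th (q.subst θ) = .app c lsc) :
    (∃ x, q = .var x) ∨
    ∃ ms, q = .app c ms ∧ ms.map (fun m => norm Th (m.subst θ)) = lsc := by
  cases q with
  | var x => exact Or.inl ⟨x, rfl⟩
  | app k ms =>
    right
    rw [subst_app, norm_app] at hq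
    rcases collapse_cases Th k ((ms.map (Tm.subst θ)).map (norm Th)) with hcase | ⟨e', t', he', _, hcol⟩
    · rw [hcase] at hq
      obtain ⟨rfl, h2⟩ := Tm.app.inj hq
      exact ⟨ms, rfl, by simpa [List.map_map, Function.comp_def] using h2⟩
    · rw [hcol] at hq
      obtain ⟨rfl, -⟩ := Tm.app.inj hq
      exact absurd rfl (hc2 _ he')

/-- Inversion when the normal form of an instance is `app f ls`. -/
theorem inv_subst_fapp {f e : F} (hfe : (f, e) ∈ Th.pairs)
    (q : Tm F) (θ : ℕ → Tm F) (lsf : List (Tm F))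
    (hq : norm Th (q.subst θ) = .app f lsf) :
    (∃ x, q = .var x) ∨
    ∃ ms, q = .app f ms ∧ ms.map (fun m => norm Th (m.subst θ)) = lsf := by
  cases q with
  | var x => exact Or.inl ⟨x, rfl⟩
  | app k ms =>
    right
    rw [subst_app, norm_app] at hq
    rcases collapse_cases Th k ((ms.map (Tm.subst θ)).map (norm Th)) with hcase | ⟨e', t', he', _, hcol⟩
    · rw [hcase] at hq
      obtain ⟨rfl, h2⟩ := Tm.app.inj hq
      exact ⟨ms, rfl, by simpa [List.map_map, Function.comp_def] using h2⟩
    · rw [hcol] at hq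
      obtain ⟨rfl, -⟩ := Tm.app.inj hq
      exact absurd rfl (fst_ne_snd Th hfe he').symm

/-- Inversion when the normal form of an instance is the absorption constant. -/
theorem inv_subst_eps {f e : F} (hfe : (f, e) ∈ Th.pairs)
    (q : Tm F) (θ : ℕ → Tm F)
    (hq : norm Th (q.subst θ) = .app e []) :
    (∃ x, q = .var x) ∨ q = .app e [] ∨
    ∃ m1 m2, q = .app f [m1, m2] ∧
      (norm Th (m1.subst θ) = .app e [] ∨ norm Th (m2.subst θ) = .app e []) := by
  cases q with
  | var x => exact Or.inl ⟨x, rfl⟩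
  | app k ms =>
    right
    rw [subst_app, norm_app] at hq
    rcases collapse_cases Th k ((ms.map (Tm.subst θ)).map (norm Th)) with hcase | ⟨e', t', he', hls, hcol⟩
    · rw [hcase] at hq
      obtain ⟨rfl, h2⟩ := Tm.app.inj hq
      left
      obtain rfl : ms = [] := by
        cases ms with
        | nil => rfl
        | cons _ _ => simp at h2
      rfl
    · rw [hcol] at hq
      obtain ⟨rfl, -⟩ := Tm.app.inj hq
      obtain rfl : k = f := pair_unique' Th he' hfe
      right
      rw [List.map_map] at hls
      obtain ⟨m1, m2, rfl⟩ : ∃ m1 m2, ms = [m1, m2] := by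
        rw [← List.length_eq_two]
        rcases hls with hls | hls <;>
          simpa using congrArg List.length hls
      refine ⟨m1, m2, rfl, ?_⟩
      rcases hls with hls | hls <;>
        simp only [List.map_cons, List.map_nil, List.cons.injEq, Function.comp_apply] at hls
      · exact Or.inl hls.1
      · exact Or.inr hls.2.1

/-- If some instance of `m` normalizes to `ε`, then so does the instance by
the constant-`ε` substitution. -/
theorem normE_const {f e : F} (hfe : (f, e) ∈ Th.pairs) (m : Tm F) (θ : ℕ → Tm F)
    (hm : norm Th (m.subst θ) = .app e []) :
    norm Th (m.subst (fun _ => .app e [])) = .app e [] := by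
  suffices H : ∀ n (m : Tm F), sizeOf m ≤ n → ∀ θ : ℕ → Tm F, norm Th (m.subst θ) = .app e [] →
      norm Th (m.subst (fun _ => .app e [])) = .app e [] from H _ m le_rfl θ hm
  clear hm θ m
  intro n
  induction n with
  | zero => intro m hs; cases m <;> simp at hs
  | succ n ih =>
    intro m hs θ hm
    have hE : norm Th (.app e [] : Tm F) = .app e [] := norm_empty_app Th e
    rcases inv_subst_eps hfe m θ hm with ⟨x, rfl⟩ | rfl | ⟨m1, m2, rfl, hcase⟩
    · rw [subst_var]; exact hE
    · rw [subst_app]; simpa using hE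
    · have hs1 : sizeOf m1 ≤ n := by
        have := List.sizeOf_lt_of_mem (show m1 ∈ [m1, m2] by simp)
        simp only [Tm.app.sizeOf_spec] at hs; omega
      have hs2 : sizeOf m2 ≤ n := by
        have := List.sizeOf_lt_of_mem (show m2 ∈ [m1, m2] by simp)
        simp only [Tm.app.sizeOf_spec] at hs; omega
      rw [subst_app]
      simp only [List.map_cons, List.map_nil]
      rw [norm_app]
      simp only [List.map_cons, List.map_nil]
      rcases hcase with h1 | h2
      · rw [ih m1 hs1 θ h1]
        exact collapse_pos Th hfe (Or.inl rfl)
      · rw [ih m2 hs2 θ h2]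
        exact collapse_pos Th hfe (Or.inr rfl)

end Inv
section Side
variable {F : Type} {Sg : AbsSig F} {Th : AbsTh Sg} {f e g h a : F}

theorem linear_pair {k : F} {s t : Tm F} (hl : Linear (.app k [s, t])) :
    Linear s ∧ Linear t ∧ ∀ z, VarIn z s → ¬ VarIn z t := by
  cases hl with
  | app _ h1 h2 =>
    rw [List.pairwise_cons] at h2
    exact ⟨h1 s (by simp), h1 t (by simp), h2.1 t (by simp)⟩

theorem norm_app_nofst {k : F} (hk : ∀ e', (k, e') ∉ Th.pairs) (ls : List (Tm F)) :
    norm Th (.app k ls) = .app k (ls.map (norm Th)) := by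
  rw [norm_app]
  rcases collapse_cases Th k (ls.map (norm Th)) with hc | ⟨e', t', he', _, _⟩
  · exact hc
  · exact absurd he' (hk e')

theorem norm_fapp_absorbL (hfe : (f, e) ∈ Th.pairs) (s t : Tm F)
    (hs : norm Th s = .app e []) : norm Th (.app f [s, t]) = .app e [] := by
  rw [norm_app]; simp only [List.map_cons, List.map_nil, hs]
  exact collapse_pos Th hfe (Or.inl rfl)

theorem norm_fapp_absorbR (hfe : (f, e) ∈ Th.pairs) (s t : Tm F)
    (ht : norm Th t = .app e []) : norm Th (.app f [s, t]) = .app e [] := by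
  rw [norm_app]; simp only [List.map_cons, List.map_nil, ht]
  exact collapse_pos Th hfe (Or.inr rfl)

theorem norm_fapp_ne (hfe : (f, e) ∈ Th.pairs) (s t : Tm F)
    (hs : norm Th s ≠ .app e []) (ht : norm Th t ≠ .app e []) :
    norm Th (.app f [s, t]) = .app f [norm Th s, norm Th t] := by
  rw [norm_app]
  rcases collapse_cases Th f ([s, t].map (norm Th)) with hc | ⟨e', t', he', hls, hc⟩
  · simpa using hc
  · obtain rfl := pair_unique Th he' hfe
    rcases hls with h2 | h2 <;> simp only [List.map_cons, List.map_nil, List.cons.injEq] at h2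
    · exact absurd h2.1 hs
    · exact absurd h2.2.1 ht

theorem norm_fapp_cases (hfe : (f, e) ∈ Th.pairs) (ls : List (Tm F)) :
    norm Th (.app f ls) = .app f (ls.map (norm Th)) ∨ norm Th (.app f ls) = .app e [] := by
  rw [norm_app]
  rcases collapse_cases Th f (ls.map (norm Th)) with hc | ⟨e', t', he', _, hc⟩
  · exact Or.inl hc
  · right; rw [hc, pair_unique Th he' hfe]

theorem sideL (hfe : (f, e) ∈ Th.pairs)
    (hpure : ∀ p ∈ Th.pairs, g ≠ p.1 ∧ g ≠ p.2 ∧ h ≠ p.1 ∧ h ≠ p.2 ∧ a ≠ p.1 ∧ a ≠ p.2)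
    (hhe : h ≠ e) (hae : a ≠ e) (u v : ℕ) (p : Tm F) (hlin : Linear p)
    (σ τ : ℕ → Tm F)
    (h1 : norm Th (p.subst σ) = .app e [])
    (h2 : norm Th (p.subst τ) = .app f [.app h [.app e []], .app a []]) :
    (∃ δ, norm Th (p.subst δ) = .app f [.var u, .app a []]) ∨
    (∃ δ, norm Th (p.subst δ) = .app f [.app h [.app e []], .var v]) := by
  have hh_nofst : ∀ e', (h, e') ∉ Th.pairs := fun e' hp' => (hpure _ hp').2.2.1 rfl
  have ha_nofst : ∀ e', (a, e') ∉ Th.pairs := fun e' hp' => (hpure _ hp').2.2.2.2.1 rfl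
  have hh_nosnd : ∀ p ∈ Th.pairs, h ≠ p.2 := fun p hp => (hpure p hp).2.2.2.1
  have ha_nosnd : ∀ p ∈ Th.pairs, a ≠ p.2 := fun p hp => (hpure p hp).2.2.2.2.2
  have hE : norm Th (.app e [] : Tm F) = .app e [] := norm_empty_app Th e
  have hA : norm Th (.app a [] : Tm F) = .app a [] := norm_empty_app Th a
  have hHE : norm Th (.app h [.app e []] : Tm F) = .app h [.app e []] := by
    rw [norm_app_nofst hh_nofst]; simp [hE]
  have hAneE : (Tm.app a [] : Tm F) ≠ .app e [] := by simp [hae]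
  have hHEneE : (Tm.app h [.app e []] : Tm F) ≠ .app e [] := by simp [hhe]
  rcases inv_subst_fapp hfe p τ _ h2 with ⟨x, rfl⟩ | ⟨ms, rfl, hmap⟩
  · -- p is a variable
    left
    refine ⟨fun _ => .app f [.var u, .app a []], ?_⟩
    rw [subst_var, norm_fapp_ne hfe _ _ (by rw [norm_var]; simp) (by rw [hA]; exact hAneE),
      norm_var, hA]
  · obtain ⟨l1, l2, rfl⟩ : ∃ l1 l2, ms = [l1, l2] := by
      rw [← List.length_eq_two]; simpa using congrArg List.length hmap
    simp only [List.map_cons, List.map_nil, List.cons.injEq, and_true] at hmap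
    obtain ⟨hτ1, hτ2⟩ := hmap
    obtain ⟨hlin1, hlin2, hdisj⟩ := linear_pair hlin
    have hσor : norm Th (l1.subst σ) = .app e [] ∨ norm Th (l2.subst σ) = .app e [] := by
      rcases inv_subst_eps hfe _ σ h1 with ⟨x, hx⟩ | hx | ⟨m1, m2, hx, hσ⟩
      · exact absurd hx (by simp)
      · obtain ⟨hfe', -⟩ := Tm.app.inj hx
        exact absurd hfe' (Th.ne _ hfe)
      · obtain ⟨-, hls⟩ := Tm.app.inj hx
        obtain ⟨rfl, rfl, -⟩ : l1 = m1 ∧ l2 = m2 ∧ True := by simpa using hls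
        exact hσ
    rcases hσor with hσ1 | hσ2
    · -- first argument collapses on the σ side
      rcases inv_subst_rigid hh_nofst hh_nosnd l1 τ _ hτ1 with ⟨x, rfl⟩ | ⟨ms1, rfl, hmap1⟩
      swap
      · rw [subst_app, norm_app_nofst hh_nofst] at hσ1
        exact absurd (Tm.app.inj hσ1).1 hhe
      -- l1 = var x; l2 is var or the constant a
      left
      rcases inv_subst_rigid ha_nofst ha_nosnd l2 τ _ hτ2 with ⟨y, rfl⟩ | ⟨ms2, rfl, hmap2⟩
      · have hxy : x ≠ y := by intro hh; subst hh; exact hdisj x (.var x) (.var x)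
        refine ⟨fun z => if z = x then .var u else .app a [], ?_⟩
        rw [subst_app]
        simp only [List.map_cons, List.map_nil, subst_var, eq_self_iff_true, if_true, if_neg (Ne.symm hxy)]
        rw [norm_fapp_ne hfe _ _ (by rw [norm_var]; simp) (by rw [hA]; exact hAneE),
          norm_var, hA]
      · obtain rfl : ms2 = [] := by simpa using congrArg List.length hmap2
        refine ⟨fun z => if z = x then .var u else .app a [], ?_⟩
        rw [subst_app]
        simp only [List.map_cons, List.map_nil, subst_var, eq_self_iff_true, if_true, subst_app]
        rw [norm_fapp_ne hfe _ _ (by rw [norm_var]; simp) (by rw [hA]; exact hAneE),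
          norm_var, hA]
    · -- second argument collapses on the σ side
      rcases inv_subst_rigid ha_nofst ha_nosnd l2 τ _ hτ2 with ⟨y, rfl⟩ | ⟨ms2, rfl, hmap2⟩
      swap
      · rw [subst_app, norm_app_nofst ha_nofst] at hσ2
        exact absurd (Tm.app.inj hσ2).1 hae
      -- l2 = var y
      right
      rcases inv_subst_rigid hh_nofst hh_nosnd l1 τ _ hτ1 with ⟨x, rfl⟩ | ⟨ms1, rfl, hmap1⟩
      · have hxy : x ≠ y := by intro hh; subst hh; exact hdisj x (.var x) (.var x)
        refine ⟨fun z => if z = y then .var v else .app h [.app e []], ?_⟩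
        rw [subst_app]
        simp only [List.map_cons, List.map_nil, subst_var, eq_self_iff_true, if_true, if_neg hxy]
        rw [norm_fapp_ne hfe _ _ (by rw [hHE]; exact hHEneE) (by rw [norm_var]; simp),
          norm_var, hHE]
      · -- l1 = app h [m]
        obtain ⟨m, rfl⟩ : ∃ m, ms1 = [m] := by
          rw [← List.length_eq_one_iff]; simpa using congrArg List.length hmap1
        simp only [List.map_cons, List.map_nil, List.cons.injEq, and_true] at hmap1
        have hmE := normE_const hfe m τ hmap1
        refine ⟨fun z => if z = y then .var v else .app e [], ?_⟩
        have hmδ : m.subst (fun z => if z = y then .var v else .app e []) =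
            m.subst (fun _ => .app e []) := by
          apply subst_congr
          intro z hz
          have hzy : z ≠ y := fun hzy =>
            hdisj z (.app h (by simp) hz) (hzy ▸ .var y)
          rw [if_neg hzy]
        rw [subst_app]
        simp only [List.map_cons, List.map_nil, subst_var, eq_self_iff_true, if_true, subst_app]
        have hl1 : norm Th (.app h [m.subst
            (fun z => if z = y then .var v else .app e [])]) = .app h [.app e []] := by
          rw [norm_app_nofst hh_nofst]
          simp only [List.map_cons, List.map_nil]
          rw [hmδ, hmE]
        rw [norm_fapp_ne hfe _ _ (by rw [hl1]; exact hHEneE) (by rw [norm_var]; simp),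
          norm_var, hl1]

theorem sideR (hfe : (f, e) ∈ Th.pairs)
    (hpure : ∀ p ∈ Th.pairs, g ≠ p.1 ∧ g ≠ p.2 ∧ h ≠ p.1 ∧ h ≠ p.2 ∧ a ≠ p.1 ∧ a ≠ p.2)
    (hhe : h ≠ e) (hae : a ≠ e) (u v : ℕ) (p : Tm F) (hlin : Linear p)
    (σ τ : ℕ → Tm F)
    (h1 : norm Th (p.subst σ) = .app f [.app a [], .app h [.app e []]])
    (h2 : norm Th (p.subst τ) = .app e []) :
    (∃ δ, norm Th (p.subst δ) = .app f [.var u, .app h [.app e []]]) ∨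
    (∃ δ, norm Th (p.subst δ) = .app f [.app a [], .var v]) := by
  have hh_nofst : ∀ e', (h, e') ∉ Th.pairs := fun e' hp' => (hpure _ hp').2.2.1 rfl
  have ha_nofst : ∀ e', (a, e') ∉ Th.pairs := fun e' hp' => (hpure _ hp').2.2.2.2.1 rfl
  have hh_nosnd : ∀ p ∈ Th.pairs, h ≠ p.2 := fun p hp => (hpure p hp).2.2.2.1
  have ha_nosnd : ∀ p ∈ Th.pairs, a ≠ p.2 := fun p hp => (hpure p hp).2.2.2.2.2
  have hE : norm Th (.app e [] : Tm F) = .app e [] := norm_empty_app Th e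
  have hA : norm Th (.app a [] : Tm F) = .app a [] := norm_empty_app Th a
  have hHE : norm Th (.app h [.app e []] : Tm F) = .app h [.app e []] := by
    rw [norm_app_nofst hh_nofst]; simp [hE]
  have hAneE : (Tm.app a [] : Tm F) ≠ .app e [] := by simp [hae]
  have hHEneE : (Tm.app h [.app e []] : Tm F) ≠ .app e [] := by simp [hhe]
  rcases inv_subst_fapp hfe p σ _ h1 with ⟨x, rfl⟩ | ⟨ms, rfl, hmap⟩
  · left
    refine ⟨fun _ => .app f [.var u, .app h [.app e []]], ?_⟩
    rw [subst_var, norm_fapp_ne hfe _ _ (by rw [norm_var]; simp) (by rw [hHE]; exact hHEneE),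
      norm_var, hHE]
  · obtain ⟨l1, l2, rfl⟩ : ∃ l1 l2, ms = [l1, l2] := by
      rw [← List.length_eq_two]; simpa using congrArg List.length hmap
    simp only [List.map_cons, List.map_nil, List.cons.injEq, and_true] at hmap
    obtain ⟨hσ1, hσ2⟩ := hmap
    obtain ⟨hlin1, hlin2, hdisj⟩ := linear_pair hlin
    have hτor : norm Th (l1.subst τ) = .app e [] ∨ norm Th (l2.subst τ) = .app e [] := by
      rcases inv_subst_eps hfe _ τ h2 with ⟨x, hx⟩ | hx | ⟨m1, m2, hx, hτ⟩
      · exact absurd hx (by simp)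
      · obtain ⟨hfe', -⟩ := Tm.app.inj hx
        exact absurd hfe' (Th.ne _ hfe)
      · obtain ⟨-, hls⟩ := Tm.app.inj hx
        obtain ⟨rfl, rfl, -⟩ : l1 = m1 ∧ l2 = m2 ∧ True := by simpa using hls
        exact hτ
    rcases hτor with hτ1 | hτ2
    · -- first argument collapses on the τ side; l1 must be a variable
      rcases inv_subst_rigid ha_nofst ha_nosnd l1 σ _ hσ1 with ⟨x, rfl⟩ | ⟨ms1, rfl, hmap1⟩
      swap
      · rw [subst_app, norm_app_nofst ha_nofst] at hτ1
        exact absurd (Tm.app.inj hτ1).1 hae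
      left
      rcases inv_subst_rigid hh_nofst hh_nosnd l2 σ _ hσ2 with ⟨y, rfl⟩ | ⟨ms2, rfl, hmap2⟩
      · have hxy : x ≠ y := by intro hh; subst hh; exact hdisj x (.var x) (.var x)
        refine ⟨fun z => if z = x then .var u else .app h [.app e []], ?_⟩
        rw [subst_app]
        simp only [List.map_cons, List.map_nil, subst_var, eq_self_iff_true, if_true, if_neg (Ne.symm hxy)]
        rw [norm_fapp_ne hfe _ _ (by rw [norm_var]; simp) (by rw [hHE]; exact hHEneE),
          norm_var, hHE]
      · -- l2 = app h [m]
        obtain ⟨m, rfl⟩ : ∃ m, ms2 = [m] := by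
          rw [← List.length_eq_one_iff]; simpa using congrArg List.length hmap2
        simp only [List.map_cons, List.map_nil, List.cons.injEq, and_true] at hmap2
        have hmE := normE_const hfe m σ hmap2
        refine ⟨fun z => if z = x then .var u else .app e [], ?_⟩
        have hmδ : m.subst (fun z => if z = x then .var u else .app e []) =
            m.subst (fun _ => .app e []) := by
          apply subst_congr
          intro z hz
          have hzx : z ≠ x := fun hzx =>
            hdisj z (hzx ▸ .var x) (.app h (by simp) hz)
          rw [if_neg hzx]
        rw [subst_app]
        simp only [List.map_cons, List.map_nil, subst_var, eq_self_iff_true, if_true, subst_app]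
        have hl2 : norm Th (.app h [m.subst
            (fun z => if z = x then .var u else .app e [])]) = .app h [.app e []] := by
          rw [norm_app_nofst hh_nofst]
          simp only [List.map_cons, List.map_nil]
          rw [hmδ, hmE]
        rw [norm_fapp_ne hfe _ _ (by rw [norm_var]; simp) (by rw [hl2]; exact hHEneE),
          norm_var, hl2]
    · -- second argument collapses on the τ side; l2 must be a variable
      rcases inv_subst_rigid hh_nofst hh_nosnd l2 σ _ hσ2 with ⟨y, rfl⟩ | ⟨ms2, rfl, hmap2⟩
      swap
      · rw [subst_app, norm_app_nofst hh_nofst] at hτ2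
        exact absurd (Tm.app.inj hτ2).1 hhe
      right
      rcases inv_subst_rigid ha_nofst ha_nosnd l1 σ _ hσ1 with ⟨x, rfl⟩ | ⟨ms1, rfl, hmap1⟩
      · have hxy : x ≠ y := by intro hh; subst hh; exact hdisj x (.var x) (.var x)
        refine ⟨fun z => if z = y then .var v else .app a [], ?_⟩
        rw [subst_app]
        simp only [List.map_cons, List.map_nil, subst_var, eq_self_iff_true, if_true, if_neg hxy]
        rw [norm_fapp_ne hfe _ _ (by rw [hA]; exact hAneE) (by rw [norm_var]; simp),
          norm_var, hA]
      · obtain rfl : ms1 = [] := by simpa using congrArg List.length hmap1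
        refine ⟨fun z => if z = y then .var v else .app a [], ?_⟩
        rw [subst_app]
        simp only [List.map_cons, List.map_nil, subst_var, eq_self_iff_true, if_true, subst_app]
        rw [norm_fapp_ne hfe _ _ (by rw [hA]; exact hAneE) (by rw [norm_var]; simp),
          norm_var, hA]

end Side
section Main
variable {F : Type} {Sg : AbsSig F} {Th : AbsTh Sg}

theorem linear_two {k : F} {s t : Tm F} (hs : Linear s) (ht : Linear t)
    (hd : ∀ z, VarIn z s → ¬ VarIn z t) : Linear (.app k [s, t]) := by
  refine .app k ?_ ?_
  · intro x hx
    rcases hx with _ | ⟨_, hx⟩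
    · exact hs
    · rcases hx with _ | ⟨_, hx⟩
      · exact ht
      · cases hx
  · rw [List.pairwise_cons]
    refine ⟨?_, by simp⟩
    intro t' ht'
    rcases ht' with _ | ⟨_, ht'⟩
    · exact hd
    · cases ht'

theorem linear_const {k : F} : Linear (.app k [] : Tm F) := .app k (by simp) (by simp)

theorem novar_app_nil {k : F} (z : ℕ) : ¬ VarIn z (.app k [] : Tm F) := by
  intro hz
  rcases varIn_app_iff.1 hz with ⟨t, ht, -⟩
  simp at ht

end Main
/-- Example 5: the four listed linear terms form a minimal
complete set of linear `Abs`-generalizations of `g(ε_f, f(a, h(ε_f)))` and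
`g(f(h(ε_f), a), ε_f)`. -/
theorem linear_mcsg_example {F : Type} {Sg : AbsSig F} (Th : AbsTh Sg)
    (f e g h a : F)
    (hfe : (f, e) ∈ Th.pairs)
    (hg : Sg.arity g = 2) (hh : Sg.arity h = 1) (ha : Sg.arity a = 0)
    (hgh : g ≠ h) (hga : g ≠ a) (hha : h ≠ a) (hge : g ≠ e) (hhe : h ≠ e) (hae : a ≠ e)
    (hpure : ∀ p ∈ Th.pairs, g ≠ p.1 ∧ g ≠ p.2 ∧ h ≠ p.1 ∧ h ≠ p.2 ∧ a ≠ p.1 ∧ a ≠ p.2)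
    (u1 u2 v1 v2 : ℕ)
    (h12 : u1 ≠ u2) (h13 : u1 ≠ v1) (h14 : u1 ≠ v2)
    (h23 : u2 ≠ v1) (h24 : u2 ≠ v2) (h34 : v1 ≠ v2)
    (s' t' L1 L2 L3 L4 : Tm F)
    (hs : s' = Tm.app g [Tm.app e [], Tm.app f [Tm.app a [], Tm.app h [Tm.app e []]]])
    (ht : t' = Tm.app g [Tm.app f [Tm.app h [Tm.app e []], Tm.app a []], Tm.app e []])
    (hL1 : L1 = Tm.app g [Tm.app f [Tm.var u1, Tm.app a []],
                          Tm.app f [Tm.var u2, Tm.app h [Tm.app e []]]])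
    (hL2 : L2 = Tm.app g [Tm.app f [Tm.var u1, Tm.app a []],
                          Tm.app f [Tm.app a [], Tm.var v2]])
    (hL3 : L3 = Tm.app g [Tm.app f [Tm.app h [Tm.app e []], Tm.var v1],
                          Tm.app f [Tm.var u2, Tm.app h [Tm.app e []]]])
    (hL4 : L4 = Tm.app g [Tm.app f [Tm.app h [Tm.app e []], Tm.var v1],
                          Tm.app f [Tm.app a [], Tm.var v2]]) :
    (∀ r ∈ ({L1, L2, L3, L4} : Set (Tm F)), Linear r ∧ Gen Th r s' t') ∧
    (∀ r : Tm F, Linear r → Gen Th r s' t' →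
        ∃ r' ∈ ({L1, L2, L3, L4} : Set (Tm F)), MoreGen Th r r') ∧
    (∀ r ∈ ({L1, L2, L3, L4} : Set (Tm F)), ∀ r' ∈ ({L1, L2, L3, L4} : Set (Tm F)),
        r ≠ r' → ¬ MoreGen Th r r') := by
  classical
  subst hs ht hL1 hL2 hL3 hL4
  -- basic symbol facts
  have hfne : f ≠ e := Th.ne _ hfe
  have hg_nofst : ∀ e', (g, e') ∉ Th.pairs := fun e' hp' => (hpure _ hp').1 rfl
  have hh_nofst : ∀ e', (h, e') ∉ Th.pairs := fun e' hp' => (hpure _ hp').2.2.1 rfl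
  have ha_nofst : ∀ e', (a, e') ∉ Th.pairs := fun e' hp' => (hpure _ hp').2.2.2.2.1 rfl
  have hg_nosnd : ∀ p ∈ Th.pairs, g ≠ p.2 := fun p hp => (hpure _ hp).2.1
  -- normal form computations
  have hE : norm Th (.app e [] : Tm F) = .app e [] := norm_empty_app Th e
  have hA : norm Th (.app a [] : Tm F) = .app a [] := norm_empty_app Th a
  have hHE : norm Th (.app h [.app e []] : Tm F) = .app h [.app e []] := by
    rw [norm_app_nofst hh_nofst]; simp [hE]
  have hAneE : (Tm.app a [] : Tm F) ≠ .app e [] := by simp [hae]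
  have hHEneE : (Tm.app h [.app e []] : Tm F) ≠ .app e [] := by simp [hhe]
  have nFE2 : norm Th (.app f [.app a [], .app h [.app e []]] : Tm F)
      = .app f [.app a [], .app h [.app e []]] := by
    rw [norm_fapp_ne hfe _ _ (by rw [hA]; exact hAneE) (by rw [hHE]; exact hHEneE), hA, hHE]
  have nFE1 : norm Th (.app f [.app h [.app e []], .app a []] : Tm F)
      = .app f [.app h [.app e []], .app a []] := by
    rw [norm_fapp_ne hfe _ _ (by rw [hHE]; exact hHEneE) (by rw [hA]; exact hAneE), hHE, hA]
  have nS : norm Th (.app g [.app e [], .app f [.app a [], .app h [.app e []]]] : Tm F)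
      = .app g [.app e [], .app f [.app a [], .app h [.app e []]]] := by
    rw [norm_app_nofst hg_nofst]
    simp only [List.map_cons, List.map_nil]
    rw [hE, nFE2]
  have nT : norm Th (.app g [.app f [.app h [.app e []], .app a []], .app e []] : Tm F)
      = .app g [.app f [.app h [.app e []], .app a []], .app e []] := by
    rw [norm_app_nofst hg_nofst]
    simp only [List.map_cons, List.map_nil]
    rw [hE, nFE1]
  have nP1 : norm Th (.app f [.var u1, .app a []] : Tm F) = .app f [.var u1, .app a []] := by
    rw [norm_fapp_ne hfe _ _ (by rw [norm_var]; simp) (by rw [hA]; exact hAneE), norm_var, hA]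
  have nP3 : norm Th (.app f [.app h [.app e []], .var v1] : Tm F)
      = .app f [.app h [.app e []], .var v1] := by
    rw [norm_fapp_ne hfe _ _ (by rw [hHE]; exact hHEneE) (by rw [norm_var]; simp), hHE, norm_var]
  have nQ1 : norm Th (.app f [.var u2, .app h [.app e []]] : Tm F)
      = .app f [.var u2, .app h [.app e []]] := by
    rw [norm_fapp_ne hfe _ _ (by rw [norm_var]; simp) (by rw [hHE]; exact hHEneE), norm_var, hHE]
  have nQ2 : norm Th (.app f [.app a [], .var v2] : Tm F) = .app f [.app a [], .var v2] := by
    rw [norm_fapp_ne hfe _ _ (by rw [hA]; exact hAneE) (by rw [norm_var]; simp), hA, norm_var]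
  have nL1 : norm Th (.app g [.app f [.var u1, .app a []],
      .app f [.var u2, .app h [.app e []]]] : Tm F)
      = .app g [.app f [.var u1, .app a []], .app f [.var u2, .app h [.app e []]]] := by
    rw [norm_app_nofst hg_nofst]; simp only [List.map_cons, List.map_nil]; rw [nP1, nQ1]
  have nL2 : norm Th (.app g [.app f [.var u1, .app a []],
      .app f [.app a [], .var v2]] : Tm F)
      = .app g [.app f [.var u1, .app a []], .app f [.app a [], .var v2]] := by
    rw [norm_app_nofst hg_nofst]; simp only [List.map_cons, List.map_nil]; rw [nP1, nQ2]
  have nL3 : norm Th (.app g [.app f [.app h [.app e []], .var v1],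
      .app f [.var u2, .app h [.app e []]]] : Tm F)
      = .app g [.app f [.app h [.app e []], .var v1], .app f [.var u2, .app h [.app e []]]] := by
    rw [norm_app_nofst hg_nofst]; simp only [List.map_cons, List.map_nil]; rw [nP3, nQ1]
  have nL4 : norm Th (.app g [.app f [.app h [.app e []], .var v1],
      .app f [.app a [], .var v2]] : Tm F)
      = .app g [.app f [.app h [.app e []], .var v1], .app f [.app a [], .var v2]] := by
    rw [norm_app_nofst hg_nofst]; simp only [List.map_cons, List.map_nil]; rw [nP3, nQ2]
  refine ⟨?part1, ?part2, ?part3⟩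
  case part1 =>
    have hnoE : ∀ z, ¬ VarIn z (.app e [] : Tm F) := novar_app_nil
    have hnoA : ∀ z, ¬ VarIn z (.app a [] : Tm F) := novar_app_nil
    have hnoHE : ∀ z, ¬ VarIn z (.app h [.app e []] : Tm F) := by
      intro z hz
      rcases varIn_app_iff.1 hz with ⟨t, htm, hv⟩
      simp at htm; subst htm
      exact hnoE z hv
    have linHE : Linear (.app h [.app e []] : Tm F) := by
      refine .app h ?_ ?_
      · intro t htm; simp at htm; subst htm; exact linear_const
      · simp
    have linP1 : Linear (.app f [.var u1, .app a []] : Tm F) :=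
      linear_two (.var u1) linear_const (fun z _ => hnoA z)
    have linP3 : Linear (.app f [.app h [.app e []], .var v1] : Tm F) :=
      linear_two linHE (.var v1) (fun z hz => absurd hz (hnoHE z))
    have linQ1 : Linear (.app f [.var u2, .app h [.app e []]] : Tm F) :=
      linear_two (.var u2) linHE (fun z _ => hnoHE z)
    have linQ2 : Linear (.app f [.app a [], .var v2] : Tm F) :=
      linear_two linear_const (.var v2) (fun z hz => absurd hz (hnoA z))
    have hvP1 : ∀ z, VarIn z (.app f [.var u1, .app a []] : Tm F) → z = u1 := by
      intro z hz
      rcases varIn_app_iff.1 hz with ⟨t, htm, hv⟩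
      simp at htm
      rcases htm with rfl | rfl
      · exact varIn_var_iff.1 hv
      · exact absurd hv (hnoA z)
    have hvP3 : ∀ z, VarIn z (.app f [.app h [.app e []], .var v1] : Tm F) → z = v1 := by
      intro z hz
      rcases varIn_app_iff.1 hz with ⟨t, htm, hv⟩
      simp at htm
      rcases htm with rfl | rfl
      · exact absurd hv (hnoHE z)
      · exact varIn_var_iff.1 hv
    have hvQ1 : ∀ z, VarIn z (.app f [.var u2, .app h [.app e []]] : Tm F) → z = u2 := by
      intro z hz
      rcases varIn_app_iff.1 hz with ⟨t, htm, hv⟩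
      simp at htm
      rcases htm with rfl | rfl
      · exact varIn_var_iff.1 hv
      · exact absurd hv (hnoHE z)
    have hvQ2 : ∀ z, VarIn z (.app f [.app a [], .var v2] : Tm F) → z = v2 := by
      intro z hz
      rcases varIn_app_iff.1 hz with ⟨t, htm, hv⟩
      simp at htm
      rcases htm with rfl | rfl
      · exact absurd hv (hnoA z)
      · exact varIn_var_iff.1 hv
    intro r hr
    simp only [Set.mem_insert_iff, Set.mem_singleton_iff] at hr
    rcases hr with rfl | rfl | rfl | rfl
    · refine ⟨linear_two linP1 linQ1 ?_, ?_, ?_⟩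
      · intro z hz1 hz2
        have := hvP1 z hz1; have := hvQ1 z hz2; omega
      · apply moreGen_of_norm _ _ (fun z => if z = u1 then (.app e [] : Tm F) else .app a [])
        rw [subst_app]
        simp only [List.map_cons, List.map_nil, subst_var, subst_app, eq_self_iff_true,
          if_true, if_neg (Ne.symm h12)]
        rw [norm_app_nofst hg_nofst]
        simp only [List.map_cons, List.map_nil]
        rw [norm_fapp_absorbL hfe _ _ hE, nFE2, nS]
      · apply moreGen_of_norm _ _
          (fun z => if z = u1 then (.app h [.app e []] : Tm F) else .app e [])
        rw [subst_app]
        simp only [List.map_cons, List.map_nil, subst_var, subst_app, eq_self_iff_true,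
          if_true, if_neg (Ne.symm h12)]
        rw [norm_app_nofst hg_nofst]
        simp only [List.map_cons, List.map_nil]
        rw [nFE1, norm_fapp_absorbL hfe _ _ hE, nT]
    · refine ⟨linear_two linP1 linQ2 ?_, ?_, ?_⟩
      · intro z hz1 hz2
        have := hvP1 z hz1; have := hvQ2 z hz2; omega
      · apply moreGen_of_norm _ _
          (fun z => if z = u1 then (.app e [] : Tm F) else .app h [.app e []])
        rw [subst_app]
        simp only [List.map_cons, List.map_nil, subst_var, subst_app, eq_self_iff_true,
          if_true, if_neg (Ne.symm h14)]
        rw [norm_app_nofst hg_nofst]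
        simp only [List.map_cons, List.map_nil]
        rw [norm_fapp_absorbL hfe _ _ hE, nFE2, nS]
      · apply moreGen_of_norm _ _
          (fun z => if z = u1 then (.app h [.app e []] : Tm F) else .app e [])
        rw [subst_app]
        simp only [List.map_cons, List.map_nil, subst_var, subst_app, eq_self_iff_true,
          if_true, if_neg (Ne.symm h14)]
        rw [norm_app_nofst hg_nofst]
        simp only [List.map_cons, List.map_nil]
        rw [nFE1, norm_fapp_absorbR hfe _ _ hE, nT]
    · refine ⟨linear_two linP3 linQ1 ?_, ?_, ?_⟩
      · intro z hz1 hz2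
        have := hvP3 z hz1; have := hvQ1 z hz2; omega
      · apply moreGen_of_norm _ _ (fun z => if z = v1 then (.app e [] : Tm F) else .app a [])
        rw [subst_app]
        simp only [List.map_cons, List.map_nil, subst_var, subst_app, eq_self_iff_true,
          if_true, if_neg h23]
        rw [norm_app_nofst hg_nofst]
        simp only [List.map_cons, List.map_nil]
        rw [norm_fapp_absorbR hfe _ _ hE, nFE2, nS]
      · apply moreGen_of_norm _ _ (fun z => if z = v1 then (.app a [] : Tm F) else .app e [])
        rw [subst_app]
        simp only [List.map_cons, List.map_nil, subst_var, subst_app, eq_self_iff_true,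
          if_true, if_neg h23]
        rw [norm_app_nofst hg_nofst]
        simp only [List.map_cons, List.map_nil]
        rw [nFE1, norm_fapp_absorbL hfe _ _ hE, nT]
    · refine ⟨linear_two linP3 linQ2 ?_, ?_, ?_⟩
      · intro z hz1 hz2
        have := hvP3 z hz1; have := hvQ2 z hz2; omega
      · apply moreGen_of_norm _ _
          (fun z => if z = v1 then (.app e [] : Tm F) else .app h [.app e []])
        rw [subst_app]
        simp only [List.map_cons, List.map_nil, subst_var, subst_app, eq_self_iff_true,
          if_true, if_neg (Ne.symm h34)]
        rw [norm_app_nofst hg_nofst]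
        simp only [List.map_cons, List.map_nil]
        rw [norm_fapp_absorbR hfe _ _ hE, nFE2, nS]
      · apply moreGen_of_norm _ _ (fun z => if z = v1 then (.app a [] : Tm F) else .app e [])
        rw [subst_app]
        simp only [List.map_cons, List.map_nil, subst_var, subst_app, eq_self_iff_true,
          if_true, if_neg (Ne.symm h34)]
        rw [norm_app_nofst hg_nofst]
        simp only [List.map_cons, List.map_nil]
        rw [nFE1, norm_fapp_absorbR hfe _ _ hE, nT]
  case part2 =>
    intro r hlinr hgen
    obtain ⟨⟨σ, -, hσ⟩, ⟨τ, -, hτ⟩⟩ := hgen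
    have hnσ := (norm_eq_of_absEq Th hσ).trans nS
    have hnτ := (norm_eq_of_absEq Th hτ).trans nT
    rcases inv_subst_rigid hg_nofst hg_nosnd r σ _ hnσ with ⟨x, rfl⟩ | ⟨ms, rfl, hmap⟩
    · refine ⟨_, Set.mem_insert _ _, ?_⟩
      apply moreGen_of_norm _ _ (fun _ => (.app g [.app f [.var u1, .app a []],
        .app f [.var u2, .app h [.app e []]]] : Tm F))
      rw [subst_var]
    · obtain ⟨r1, r2, rfl⟩ : ∃ r1 r2, ms = [r1, r2] := by
        rw [← List.length_eq_two]; simpa using congrArg List.length hmap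
      simp only [List.map_cons, List.map_nil, List.cons.injEq, and_true] at hmap
      obtain ⟨hσ1, hσ2⟩ := hmap
      rw [subst_app, norm_app_nofst hg_nofst] at hnτ
      simp only [List.map_cons, List.map_nil, Tm.app.injEq, List.cons.injEq, and_true,
        true_and, eq_self_iff_true] at hnτ
      obtain ⟨hτ1, hτ2⟩ := hnτ
      obtain ⟨hl1, hl2, hdisj⟩ := linear_pair hlinr
      have combine : ∀ (δ1 δ2 : ℕ → Tm F) (P Q : Tm F),
          norm Th (r1.subst δ1) = P → norm Th (r2.subst δ2) = Q →
          norm Th (.app g [P, Q]) = .app g [P, Q] →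
          MoreGen Th (.app g [r1, r2]) (.app g [P, Q]) := by
        intro δ1 δ2 P Q h1' h2' hPQ
        apply moreGen_of_norm _ _ (fun z => if VarIn z r1 then δ1 z else δ2 z)
        have e1 : Tm.subst (fun z => if VarIn z r1 then δ1 z else δ2 z) r1 = Tm.subst δ1 r1 :=
          subst_congr _ _ r1 (fun z hz => if_pos hz)
        have e2 : Tm.subst (fun z => if VarIn z r1 then δ1 z else δ2 z) r2 = Tm.subst δ2 r2 :=
          subst_congr _ _ r2 (fun z hz => if_neg (fun hz1 => hdisj z hz1 hz))
        rw [subst_app]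
        simp only [List.map_cons, List.map_nil]
        rw [e1, e2, norm_app_nofst hg_nofst]
        simp only [List.map_cons, List.map_nil]
        rw [h1', h2', hPQ]
      rcases sideL hfe hpure hhe hae u1 v1 r1 hl1 σ τ hσ1 hτ1 with ⟨δ1, hδ1⟩ | ⟨δ1, hδ1⟩ <;>
        rcases sideR hfe hpure hhe hae u2 v2 r2 hl2 σ τ hσ2 hτ2 with ⟨δ2, hδ2⟩ | ⟨δ2, hδ2⟩
      · exact ⟨_, by simp, combine δ1 δ2 _ _ hδ1 hδ2 nL1⟩
      · exact ⟨_, by simp, combine δ1 δ2 _ _ hδ1 hδ2 nL2⟩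
      · exact ⟨_, by simp, combine δ1 δ2 _ _ hδ1 hδ2 nL3⟩
      · exact ⟨_, by simp, combine δ1 δ2 _ _ hδ1 hδ2 nL4⟩
  case part3 =>
    have cP13 : ∀ θ : ℕ → Tm F, norm Th (Tm.subst θ (.app f [.var u1, .app a []]))
        ≠ .app f [.app h [.app e []], .var v1] := by
      intro θ hcon
      rw [subst_app] at hcon
      simp only [List.map_cons, List.map_nil, subst_var, subst_app] at hcon
      rcases norm_fapp_cases hfe [θ u1, .app a []] with hc | hc <;> rw [hc] at hcon
      · simp [hA] at hcon
      · exact hfne (Tm.app.inj hcon).1.symm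
    have cP31 : ∀ θ : ℕ → Tm F, norm Th (Tm.subst θ (.app f [.app h [.app e []], .var v1]))
        ≠ .app f [.var u1, .app a []] := by
      intro θ hcon
      rw [subst_app] at hcon
      simp only [List.map_cons, List.map_nil, subst_var, subst_app] at hcon
      rcases norm_fapp_cases hfe [.app h [.app e []], θ v1] with hc | hc <;> rw [hc] at hcon
      · simp [hHE] at hcon
      · exact hfne (Tm.app.inj hcon).1.symm
    have cQ12 : ∀ θ : ℕ → Tm F, norm Th (Tm.subst θ (.app f [.var u2, .app h [.app e []]]))
        ≠ .app f [.app a [], .var v2] := by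
      intro θ hcon
      rw [subst_app] at hcon
      simp only [List.map_cons, List.map_nil, subst_var, subst_app] at hcon
      rcases norm_fapp_cases hfe [θ u2, .app h [.app e []]] with hc | hc <;> rw [hc] at hcon
      · simp [hHE] at hcon
      · exact hfne (Tm.app.inj hcon).1.symm
    have cQ21 : ∀ θ : ℕ → Tm F, norm Th (Tm.subst θ (.app f [.app a [], .var v2]))
        ≠ .app f [.var u2, .app h [.app e []]] := by
      intro θ hcon
      rw [subst_app] at hcon
      simp only [List.map_cons, List.map_nil, subst_var, subst_app] at hcon
      rcases norm_fapp_cases hfe [.app a [], θ v2] with hc | hc <;> rw [hc] at hcon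
      · simp [hA] at hcon
      · exact hfne (Tm.app.inj hcon).1.symm
    intro r hr r' hr' hne hMG
    simp only [Set.mem_insert_iff, Set.mem_singleton_iff] at hr hr'
    obtain ⟨θ, -, habs⟩ := hMG
    have hn := norm_eq_of_absEq Th habs
    rcases hr with rfl | rfl | rfl | rfl <;> rcases hr' with rfl | rfl | rfl | rfl <;>
      [skip; skip; skip; skip; skip; skip; skip; skip; skip; skip; skip; skip; skip; skip;
        skip; skip] <;>
      first
        | exact hne rfl
        | (rw [subst_app, norm_app_nofst hg_nofst] at hn
           simp only [List.map_cons, List.map_nil, nL1, nL2, nL3, nL4, Tm.app.injEq,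
             List.cons.injEq, and_true, true_and, eq_self_iff_true] at hn
           first
             | exact cP13 θ hn.1
             | exact cP31 θ hn.1
             | exact cQ12 θ hn.2
             | exact cQ21 θ hn.2)

end AbsAU
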